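/- Let F = F_{2^f} with trace map τ to F₂, and let (b₁,...,b_f) be a self-complementary basis (τ(bᵢbⱼ) = δᵢⱼ). Define φ: F → ℤ/4ℤ by φ(∑ aᵢbᵢ) = (number of i with aᵢ = 1) mod 4, where aᵢ ∈ F₂. Then for all a, a' ∈ F: φ(a + a') = φ(a) + φ(a') + 2τ(aa'), where τ(aa') ∈ F₂ is lifted to {0,1} ⊂ ℤ/4ℤ. -/

import Mathlib

open Finset

private lemma val_add_zmod2 (x y : ZMod 2) :
    ((((x + y).val : ℕ) : ZMod 4)) = (((x.val : ℕ) : ZMod 4)) + (((y.val : ℕ) : ZMod 4))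
      + 2 * ((((x.val : ℕ) : ZMod 4)) * (((y.val : ℕ) : ZMod 4))) := by
  revert x y; decide

private lemma val_mul_zmod2 (x y : ZMod 2) :
    ((((x * y).val : ℕ) : ZMod 4)) = (((x.val : ℕ) : ZMod 4)) * (((y.val : ℕ) : ZMod 4)) := by
  revert x y; decide

private def twoVal : ZMod 2 →+ ZMod 4 :=
  AddMonoidHom.mk' (fun x => 2 * (x.val : ZMod 4)) (by decide)

theorem stmt_4 {F : Type*} [Field F] [Fintype F] [Algebra (ZMod 2) F] {f : ℕ}
    (hcard : Fintype.card F = 2 ^ f)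
    (b : Module.Basis (Fin f) (ZMod 2) F)
    (hb : ∀ i j, Algebra.trace (ZMod 2) F (b i * b j) = if i = j then 1 else 0)
    (φ : F → ZMod 4)
    (hφ : ∀ a, φ a = ∑ i, ((b.repr a i).val : ZMod 4)) :
    ∀ a a' : F,
      φ (a + a') = φ a + φ a' + 2 * ((Algebra.trace (ZMod 2) F (a * a')).val : ZMod 4) := by
  intro a a'
  have htr : Algebra.trace (ZMod 2) F (a * a') = ∑ i, b.repr a i * b.repr a' i := by
    conv_lhs => rw [← b.sum_repr a, ← b.sum_repr a']
    rw [Finset.sum_mul_sum, map_sum]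
    simp only [map_sum, smul_mul_smul_comm, LinearMap.map_smul_of_tower, hb, smul_ite,
      smul_eq_mul, mul_one, mul_zero, Finset.sum_ite_eq, Finset.mem_univ, if_true,
      smul_zero, Finset.mul_sum]
    exact Finset.sum_congr rfl fun i _ => by
      rw [Finset.sum_eq_single i (fun j _ hj => by simp [Ne.symm hj]) (by simp), if_pos rfl, mul_one]
  have h2 : 2 * ((Algebra.trace (ZMod 2) F (a * a')).val : ZMod 4)
      = ∑ i, 2 * (((b.repr a i * b.repr a' i).val : ZMod 4)) := by
    rw [htr]
    have := map_sum twoVal (fun i => b.repr a i * b.repr a' i) Finset.univ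
    simpa only [twoVal, AddMonoidHom.mk'_apply] using this
  rw [hφ, hφ, hφ, h2, ← Finset.sum_add_distrib, ← Finset.sum_add_distrib]
  refine Finset.sum_congr rfl fun i _ => ?_
  rw [map_add, Finsupp.add_apply, val_add_zmod2, val_mul_zmod2]
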